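/- Let R = ℚ(λ₁,…,λ_m, z)[v] / (∏_{i=1}^m (v+λ_i)), where λ₁,…,λ_m, z, v are indeterminates. Define I(y) = ∑_{d=0}^∞ y^d / ∏_{i=1}^m ∏_{c=1}^d (v + λ_i + cz) in R[[y]] (the products for d=0 are empty, so I(0)=1). Then the differential operator identity ∏_{i=1}^m (z·y·d/dy + v + λ_i) I(y) = y·I(y) holds in R[[y]]. -/

import Mathlib

noncomputable section

open Finset Polynomial PowerSeries

set_option synthInstance.maxHeartbeats 1000000
set_option maxHeartbeats 1000000

/-- The field `ℚ(λ₁,…,λ_m,z)`: the fraction field of `ℚ[λ₁,…,λ_m,z]`,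
where `some i ↦ λ_i` and `none ↦ z`. -/
abbrev Kfld (m : ℕ) := FractionRing (MvPolynomial (Option (Fin m)) ℚ)

/-- The equivariant parameter `λ_i`. -/
def lam (m : ℕ) (i : Fin m) : Kfld m :=
  algebraMap (MvPolynomial (Option (Fin m)) ℚ) (Kfld m) (MvPolynomial.X (some i))

/-- The loop-rotation parameter `z`. -/
def zz (m : ℕ) : Kfld m :=
  algebraMap (MvPolynomial (Option (Fin m)) ℚ) (Kfld m) (MvPolynomial.X none)

/-- The ring `R = ℚ(λ₁,…,λ_m,z)[v] / (∏_{i=1}^m (v+λ_i))`. -/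
abbrev Rring (m : ℕ) :=
  Polynomial (Kfld m) ⧸ Ideal.span {∏ i : Fin m, (Polynomial.X + Polynomial.C (lam m i))}

/-- The class `v`, the image of the variable of `ℚ(λ,z)[v]` in `R`. -/
def vcl (m : ℕ) : Rring m :=
  Ideal.Quotient.mk _ (Polynomial.X : Polynomial (Kfld m))

/-- The structure map `ℚ(λ₁,…,λ_m,z) → R`. -/
def ι (m : ℕ) : Kfld m →+* Rring m :=
  (Ideal.Quotient.mk _).comp (Polynomial.C : Kfld m →+* Polynomial (Kfld m))

/-- The `I`-function `I(y) = ∑_{d≥0} y^d / ∏_{i=1}^m ∏_{c=1}^d (v+λ_i+cz)` in `R[[y]]`. -/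
def Ifun (m : ℕ) : PowerSeries (Rring m) :=
  PowerSeries.mk fun d =>
    Ring.inverse (∏ i : Fin m, ∏ c ∈ Finset.Icc 1 d, (vcl m + ι m (lam m i + (c : ℕ) * zz m)))

/-- The operator `y·d/dy` on `R[[y]]`, i.e. `∑ a_d y^d ↦ ∑ d·a_d y^d`. -/
def thetaOp (m : ℕ) (f : PowerSeries (Rring m)) : PowerSeries (Rring m) :=
  PowerSeries.mk fun d => (d : Rring m) * PowerSeries.coeff (R := Rring m) d f

/-- The operator `z·y·d/dy + v + λ_i` on `R[[y]]`. -/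
def Lop (m : ℕ) (i : Fin m) (f : PowerSeries (Rring m)) : PowerSeries (Rring m) :=
  PowerSeries.C (R := Rring m) (ι m (zz m)) * thetaOp m f
    + PowerSeries.C (R := Rring m) (vcl m + ι m (lam m i)) * f

lemma Ffactor (m : ℕ) :
    (Ideal.Quotient.mk (Ideal.span {∏ i : Fin m, (Polynomial.X + Polynomial.C (lam m i))})
      (∏ i : Fin m, (Polynomial.X + Polynomial.C (lam m i)))) = 0 := by
  rw [Ideal.Quotient.eq_zero_iff_mem]
  exact Ideal.subset_span rfl

lemma lam_ne (m : ℕ) (i j : Fin m) (c : ℕ) (hc : 1 ≤ c) :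
    lam m i + (c : Kfld m) * zz m ≠ lam m j := by
  intro h
  have hinj := IsFractionRing.injective (MvPolynomial (Option (Fin m)) ℚ) (Kfld m)
  have h2 : (MvPolynomial.X (some i)
        + (c : MvPolynomial (Option (Fin m)) ℚ) * MvPolynomial.X none)
      = MvPolynomial.X (some j) := by
    apply hinj
    simpa [lam, zz, map_add, map_mul, map_natCast] using h
  have h3 := congrArg (MvPolynomial.eval (fun o => o.elim 1 fun _ => 0)) h2
  simp at h3
  omega

lemma isUnit_mk (m : ℕ) (a : Kfld m) (ha : ∀ j, a ≠ lam m j) :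
    IsUnit (Ideal.Quotient.mk (Ideal.span {∏ i : Fin m, (Polynomial.X + Polynomial.C (lam m i))})
      (Polynomial.X + Polynomial.C a)) := by
  have hcop : IsCoprime (Polynomial.X + Polynomial.C a : Polynomial (Kfld m))
      (∏ i : Fin m, (Polynomial.X + Polynomial.C (lam m i))) := by
    apply IsCoprime.prod_right
    intro j _
    have h : a - lam m j ≠ 0 := sub_ne_zero.mpr (ha j)
    refine ⟨Polynomial.C ((a - lam m j)⁻¹), -Polynomial.C ((a - lam m j)⁻¹), ?_⟩
    have he : Polynomial.C ((a - lam m j)⁻¹) * (Polynomial.X + Polynomial.C a)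
        + -Polynomial.C ((a - lam m j)⁻¹) * (Polynomial.X + Polynomial.C (lam m j))
        = Polynomial.C ((a - lam m j)⁻¹ * (a - lam m j)) := by
      rw [Polynomial.C_mul, Polynomial.C_sub]; ring
    rw [he, inv_mul_cancel₀ h, map_one]
  obtain ⟨u, w, huw⟩ := hcop
  have := congrArg (Ideal.Quotient.mk
    (Ideal.span {∏ i : Fin m, (Polynomial.X + Polynomial.C (lam m i))})) huw
  simp only [map_add, map_mul, map_one, Ffactor, mul_zero, add_zero] at this
  refine ⟨⟨Ideal.Quotient.mk _ (Polynomial.X + Polynomial.C a), Ideal.Quotient.mk _ u, ?_, ?_⟩, rfl⟩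
  · rw [map_add]; linear_combination this
  · rw [map_add]; linear_combination this

lemma isUnit_B (m : ℕ) (i : Fin m) (c : ℕ) (hc : 1 ≤ c) :
    IsUnit (vcl m + ι m (lam m i + (c : ℕ) * zz m)) := by
  have h : vcl m + ι m (lam m i + (c : ℕ) * zz m)
      = Ideal.Quotient.mk _ (Polynomial.X + Polynomial.C (lam m i + (c : ℕ) * zz m)) := by
    simp [vcl, ι, map_add]
  rw [h]
  exact isUnit_mk m _ (fun j => lam_ne m i j c hc)

lemma coeff_Lop (m : ℕ) (i : Fin m) (f : PowerSeries (Rring m)) (d : ℕ) :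
    PowerSeries.coeff (R := Rring m) d (Lop m i f)
      = (ι m (zz m) * (d : Rring m) + vcl m + ι m (lam m i))
        * PowerSeries.coeff (R := Rring m) d f := by
  rw [Lop, map_add, PowerSeries.coeff_C_mul, PowerSeries.coeff_C_mul, thetaOp,
    PowerSeries.coeff_mk]
  ring

lemma coeff_foldr (m : ℕ) (l : List (Fin m)) (f : PowerSeries (Rring m)) (d : ℕ) :
    PowerSeries.coeff (R := Rring m) d (l.foldr (fun i g => Lop m i g) f)
      = l.foldr (fun i r => (ι m (zz m) * (d : Rring m) + vcl m + ι m (lam m i)) * r)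
        (PowerSeries.coeff (R := Rring m) d f) := by
  induction l with
  | nil => rfl
  | cons i l ih => simp only [List.foldr_cons, coeff_Lop, ih]

lemma fold_mul {M : Type*} [CommMonoid M] {n : ℕ} (g : Fin n → M) (c : M) :
    (List.finRange n).foldr (fun i r => g i * r) c = (∏ i, g i) * c := by
  rw [← List.prod_ofFn, List.ofFn_eq_map]
  generalize List.finRange n = l
  induction l with
  | nil => simp
  | cons i l ih => simp [ih, mul_assoc]

/-- The quantum differential equation for the `I`-function of `ℙ^{m-1}`:
`∏_{i=1}^m (z·y·d/dy + v + λ_i) I(y) = y·I(y)`. -/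
theorem stmt2 (m : ℕ) :
    (List.ofFn (fun i : Fin m => Lop m i)).foldr (fun op g => op g) (Ifun m)
      = PowerSeries.X * Ifun m := by
  ext d
  rw [List.ofFn_eq_map, List.foldr_map, coeff_foldr]
  rw [fold_mul (M := Rring m) (fun i => ι m (zz m) * (d : Rring m) + vcl m + ι m (lam m i))
    (PowerSeries.coeff (R := Rring m) d (Ifun m))]
  cases d with
  | zero =>
    rw [PowerSeries.coeff_zero_X_mul]
    have hz : (∏ i : Fin m, (ι m (zz m) * ((0 : ℕ) : Rring m) + vcl m + ι m (lam m i)))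
        = 0 := by
      have h1 : ∀ i : Fin m, ι m (zz m) * ((0 : ℕ) : Rring m) + vcl m + ι m (lam m i)
          = Ideal.Quotient.mk _ (Polynomial.X + Polynomial.C (lam m i)) := by
        intro i
        have hp : (Polynomial.C (zz m) * ((0 : ℕ) : Polynomial (Kfld m)) + Polynomial.X
            + Polynomial.C (lam m i)) = Polynomial.X + Polynomial.C (lam m i) := by
          push_cast; ring
        calc ι m (zz m) * ((0 : ℕ) : Rring m) + vcl m + ι m (lam m i)
            = Ideal.Quotient.mk _ (Polynomial.C (zz m) * ((0 : ℕ) : Polynomial (Kfld m))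
              + Polynomial.X + Polynomial.C (lam m i)) := by
              rw [map_add, map_add, map_mul, map_natCast]; rfl
          _ = _ := congrArg _ hp
      rw [Finset.prod_congr rfl fun i _ => h1 i, ← map_prod]
      exact Ffactor m
    rw [hz]; exact zero_mul (M₀ := Rring m) _
  | succ d =>
    rw [PowerSeries.coeff_succ_X_mul]
    have hB : ∀ i : Fin m, ι m (zz m) * ((d + 1 : ℕ) : Rring m) + vcl m + ι m (lam m i)
        = vcl m + ι m (lam m i + ((d + 1 : ℕ) : Kfld m) * zz m) := by
      intro i
      rw [map_add, map_mul, map_natCast]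
      ring
    rw [Finset.prod_congr rfl fun i _ => hB i]
    simp only [Ifun, PowerSeries.coeff_mk]
    set P : Rring m := ∏ i : Fin m, ∏ c ∈ Finset.Icc 1 d,
      (vcl m + ι m (lam m i + (c : ℕ) * zz m)) with hP
    set Q : Rring m := ∏ i : Fin m, (vcl m + ι m (lam m i + ((d + 1 : ℕ) : Kfld m) * zz m))
      with hQ
    have hsplit : (∏ i : Fin m, ∏ c ∈ Finset.Icc 1 (d + 1),
        (vcl m + ι m (lam m i + (c : ℕ) * zz m))) = Q * P := by
      rw [hP, hQ, ← Finset.prod_mul_distrib]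
      refine Finset.prod_congr rfl fun i _ => ?_
      rw [← Finset.insert_Icc_right_eq_Icc_add_one (Nat.le_add_left 1 d),
        Finset.prod_insert (by simp)]
    have hPu : IsUnit P := by
      refine Finset.prod_induction _ IsUnit (fun a b => IsUnit.mul) isUnit_one fun i _ => ?_
      exact Finset.prod_induction _ IsUnit (fun a b => IsUnit.mul) isUnit_one
        fun c hc => isUnit_B m i c (Finset.mem_Icc.mp hc).1
    have hQu : IsUnit Q := Finset.prod_induction _ IsUnit (fun a b => IsUnit.mul) isUnit_one
      fun i _ => isUnit_B m i (d + 1) (Nat.le_add_left 1 d)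
    rw [hsplit]
    have hinv : Ring.inverse (Q * P) = Ring.inverse P * Ring.inverse Q :=
      Ring.mul_inverse_rev Q P
    rw [hinv]
    have hc : Q * (Ring.inverse P * Ring.inverse Q)
        = Ring.inverse P * (Q * Ring.inverse Q) := by ring
    rw [hc, Ring.mul_inverse_cancel Q hQu]
    exact mul_one _
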